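/- Under Assumption (A), for every x ∈ D and every n ≥ 0: 𝔼_x[η_S(X_n) 𝟙_{j_S(X_n) = j_S(x)} 𝟙_{n < τ_∂}] = θ_{0,S}^n η_S(x). -/

import Mathlib

open MeasureTheory ProbabilityTheory Filter ENNReal

variable {α : Type*} [MeasurableSpace α]

noncomputable def kmass (S : ℕ → Kernel α α) (n : ℕ) (μ : Measure α) : ℝ≥0∞ :=
  Measure.bind μ (fun x => S n x) Set.univ

noncomputable def expParam (S : ℕ → Kernel α α) (μ : Measure α) : ℝ≥0∞ :=
  sInf {θ : ℝ≥0∞ | Filter.liminf (fun n : ℕ => θ⁻¹ ^ n * kmass S n μ) Filter.atTop = 0}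

noncomputable def theta0 (S : ℕ → Kernel α α) : ℝ≥0∞ :=
  ⨆ x : α, expParam S (Measure.dirac x)

noncomputable def polyParam (S : ℕ → Kernel α α) (μ : Measure α) : ℝ :=
  sInf {l : ℝ | 0 ≤ l ∧
    Filter.liminf (fun n : ℕ => (n : ℝ≥0∞) ^ (-l) * (theta0 S)⁻¹ ^ n * kmass S n μ)
      Filter.atTop = 0}

noncomputable def jfun (S : ℕ → Kernel α α) (x : α) : ℝ :=
  polyParam S (Measure.dirac x)

-- AUX START
lemma kmass_dirac (S : ℕ → Kernel α α) (m : ℕ) (y : α) :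
    kmass S m (Measure.dirac y) = S m y Set.univ := by
  unfold kmass
  rw [Measure.bind_apply MeasurableSet.univ (Kernel.measurable (S m)).aemeasurable]
  exact lintegral_dirac' _ (Kernel.measurable_coe (S m) MeasurableSet.univ)

noncomputable def Ffun (S : ℕ → Kernel α α) (l : ℝ) (y : α) : ℝ≥0∞ :=
  Filter.liminf (fun m : ℕ => (m : ℝ≥0∞) ^ (-l) * (theta0 S)⁻¹ ^ m * (S m y Set.univ))
    Filter.atTop

lemma Ffun_measurable (S : ℕ → Kernel α α) (l : ℝ) : Measurable (Ffun S l) := by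
  apply Measurable.liminf (f := fun m y => (m : ℝ≥0∞) ^ (-l) * (theta0 S)⁻¹ ^ m * (S m y Set.univ))
  intro m
  exact (measurable_const.mul (Kernel.measurable_coe (S m) MeasurableSet.univ))

lemma jfun_eq_sInf (S : ℕ → Kernel α α) (y : α) :
    jfun S y = sInf {l : ℝ | 0 ≤ l ∧ Ffun S l y = 0} := by
  unfold jfun polyParam Ffun
  congr 1
  ext l
  simp only [Set.mem_setOf_eq, kmass_dirac]

lemma Ffun_antitone (S : ℕ → Kernel α α) (y : α) {l l' : ℝ} (h : l ≤ l') :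
    Ffun S l' y ≤ Ffun S l y := by
  have hev : ∀ᶠ m : ℕ in atTop,
      (m : ℝ≥0∞) ^ (-l') * (theta0 S)⁻¹ ^ m * (S m y Set.univ) ≤
      (m : ℝ≥0∞) ^ (-l) * (theta0 S)⁻¹ ^ m * (S m y Set.univ) := by
    filter_upwards [Filter.eventually_ge_atTop 1] with m hm
    have h1 : (1 : ℝ≥0∞) ≤ (m : ℝ≥0∞) := by exact_mod_cast hm
    exact mul_le_mul' (mul_le_mul' (ENNReal.rpow_le_rpow_of_exponent_le h1 (by linarith)) le_rfl)
      le_rfl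
  exact Filter.liminf_le_liminf hev

lemma jfun_le_iff (S : ℕ → Kernel α α)
    (hnat : ∀ y : α, ∃ k : ℕ, jfun S y = (k : ℝ))
    (hne : ∀ y : α, ∃ l, 0 ≤ l ∧ Ffun S l y = 0) (k : ℕ) (y : α) :
    jfun S y ≤ (k : ℝ) ↔ Ffun S ((k : ℝ) + 2⁻¹) y = 0 := by
  obtain ⟨ky, hky⟩ := hnat y
  have hbdd : BddBelow {l : ℝ | 0 ≤ l ∧ Ffun S l y = 0} := ⟨0, fun l hl => hl.1⟩
  obtain ⟨l0, hl0⟩ := hne y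
  have hne' : {l : ℝ | 0 ≤ l ∧ Ffun S l y = 0}.Nonempty := ⟨l0, hl0⟩
  constructor
  · intro hle
    have hlt : sInf {l : ℝ | 0 ≤ l ∧ Ffun S l y = 0} < (k : ℝ) + 2⁻¹ := by
      rw [← jfun_eq_sInf]; linarith
    obtain ⟨l1, hl1, hlt1⟩ := exists_lt_of_csInf_lt hne' hlt
    have h2 := Ffun_antitone S y (le_of_lt hlt1)
    rw [hl1.2] at h2
    exact le_antisymm h2 zero_le
  · intro h0
    have hmem : ((k : ℝ) + 2⁻¹) ∈ {l : ℝ | 0 ≤ l ∧ Ffun S l y = 0} := ⟨by positivity, h0⟩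
    have hle : jfun S y ≤ (k : ℝ) + 2⁻¹ := by
      rw [jfun_eq_sInf]; exact csInf_le hbdd hmem
    rw [hky] at hle ⊢
    have : ky ≤ k := by
      by_contra hc
      push_neg at hc
      have : (k : ℝ) + 1 ≤ (ky : ℝ) := by exact_mod_cast hc
      linarith
    exact_mod_cast this

lemma measurableSet_jfun_le (S : ℕ → Kernel α α)
    (hnat : ∀ y : α, ∃ k : ℕ, jfun S y = (k : ℝ))
    (hne : ∀ y : α, ∃ l, 0 ≤ l ∧ Ffun S l y = 0) (k : ℕ) :
    MeasurableSet {y : α | jfun S y ≤ (k : ℝ)} := by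
  have hset : {y : α | jfun S y ≤ (k : ℝ)} = Ffun S ((k : ℝ) + 2⁻¹) ⁻¹' {0} := by
    ext y
    simpa using jfun_le_iff S hnat hne k y
  rw [hset]
  exact Ffun_measurable S _ (measurableSet_singleton 0)

lemma measurableSet_jfun_eq (S : ℕ → Kernel α α)
    (hnat : ∀ y : α, ∃ k : ℕ, jfun S y = (k : ℝ))
    (hne : ∀ y : α, ∃ l, 0 ≤ l ∧ Ffun S l y = 0) (k : ℕ) :
    MeasurableSet {y : α | jfun S y = (k : ℝ)} := by
  cases k with
  | zero =>
    have hset : {y : α | jfun S y = ((0 : ℕ) : ℝ)} = {y : α | jfun S y ≤ ((0 : ℕ) : ℝ)} := by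
      ext y
      obtain ⟨ky, hky⟩ := hnat y
      simp only [Set.mem_setOf_eq, hky, Nat.cast_zero]
      constructor
      · intro h; exact le_of_eq h
      · intro h; exact le_antisymm h (by positivity)
    rw [hset]
    exact measurableSet_jfun_le S hnat hne 0
  | succ k =>
    have hset : {y : α | jfun S y = ((k + 1 : ℕ) : ℝ)} =
        {y : α | jfun S y ≤ ((k + 1 : ℕ) : ℝ)} \ {y : α | jfun S y ≤ ((k : ℕ) : ℝ)} := by
      ext y
      obtain ⟨ky, hky⟩ := hnat y
      simp only [Set.mem_setOf_eq, hky, Set.mem_diff]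
      constructor
      · intro h
        have h1 : ky = k + 1 := by exact_mod_cast h
        subst h1
        refine ⟨le_refl _, ?_⟩
        push_cast
        intro hc
        linarith
      · rintro ⟨h1, h2⟩
        have h1' : ky ≤ k + 1 := by exact_mod_cast h1
        have h2' : ¬ (ky ≤ k) := fun hc => h2 (by exact_mod_cast hc)
        have : ky = k + 1 := by omega
        exact_mod_cast this
    rw [hset]
    exact (measurableSet_jfun_le S hnat hne (k + 1)).diff (measurableSet_jfun_le S hnat hne k)

lemma ennreal_expr_eq (S : ℕ → Kernel α α) (hθpos : 0 < theta0 S) (hθfin : theta0 S ≠ ⊤)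
    {m : ℕ} (hm : 1 ≤ m) (y : α) (hmass : S m y Set.univ ≠ ⊤) (l : ℝ) :
    (m : ℝ≥0∞) ^ (-l) * (theta0 S)⁻¹ ^ m * (S m y Set.univ) =
      ENNReal.ofReal ((m : ℝ) ^ (-l) * ((theta0 S).toReal)⁻¹ ^ m * (S m y Set.univ).toReal) := by
  have hmpos : (0 : ℝ) < (m : ℝ) := by exact_mod_cast hm
  have h1 : ENNReal.ofReal ((m : ℝ) ^ (-l)) = (m : ℝ≥0∞) ^ (-l) := by
    rw [show ENNReal.ofReal ((m : ℝ) ^ (-l)) = ENNReal.ofReal (m : ℝ) ^ (-l) from (ENNReal.ofReal_rpow_of_pos hmpos).symm, ENNReal.ofReal_natCast]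
  have h2 : ENNReal.ofReal (((theta0 S).toReal)⁻¹ ^ m) = (theta0 S)⁻¹ ^ m := by
    rw [ENNReal.ofReal_pow (by positivity)]
    congr 1
    rw [← ENNReal.toReal_inv, ENNReal.ofReal_toReal (ENNReal.inv_ne_top.mpr hθpos.ne')]
  have h3 : ENNReal.ofReal ((S m y Set.univ).toReal) = S m y Set.univ :=
    ENNReal.ofReal_toReal hmass
  rw [ENNReal.ofReal_mul (by positivity), ENNReal.ofReal_mul (by positivity), h1, h2, h3]

lemma nat_div_add_tendsto (n : ℕ) :
    Filter.Tendsto (fun m : ℕ => (m : ℝ) / ((n : ℝ) + m)) Filter.atTop (nhds 1) := by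
  have h2 : Filter.Tendsto (fun m : ℕ => (n : ℝ) / ((n : ℝ) + m)) Filter.atTop (nhds 0) := by
    apply squeeze_zero' (g := fun m : ℕ => (n : ℝ) / m)
    · filter_upwards [Filter.eventually_ge_atTop 1] with m hm
      positivity
    · filter_upwards [Filter.eventually_ge_atTop 1] with m hm
      have hm0 : (0:ℝ) < (m:ℝ) := by exact_mod_cast hm
      apply div_le_div_of_nonneg_left (by positivity) hm0
      linarith
    · exact tendsto_const_div_atTop_nhds_zero_nat (n : ℝ)
  have h3 : Filter.Tendsto (fun m : ℕ => 1 - (n : ℝ) / ((n : ℝ) + m)) Filter.atTop (nhds 1) := by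
    have := (tendsto_const_nhds (x := (1:ℝ)) (f := Filter.atTop (α := ℕ))).sub h2
    simpa using this
  apply h3.congr'
  filter_upwards [Filter.eventually_ge_atTop 1] with m hm
  have hm0 : (0:ℝ) < (m:ℝ) := by exact_mod_cast hm
  have hnm : (0:ℝ) < (n:ℝ) + m := by positivity
  field_simp
  ring

lemma ratio_pow_tendsto (n k : ℕ) :
    Filter.Tendsto (fun m : ℕ => ((m : ℝ) ^ k) / (((n : ℝ) + m) ^ k)) Filter.atTop (nhds 1) := by
  have h := (nat_div_add_tendsto n).pow k
  simp only [one_pow] at h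
  apply h.congr
  intro m
  rw [div_pow]


def IsSubMarkovSemigroup (S : ℕ → Kernel α α) : Prop :=
  S 0 = Kernel.id ∧ (∀ n m, S (n + m) = (S m) ∘ₖ (S n)) ∧ ∀ n x, (S n) x Set.univ ≤ 1

/-- **Assumption (A)** of Champagnat–Villemonais, for the sub-Markovian semigroup `S`,
with weight function `W`, probability measures `ν i`, functions `η i` (`i` in the finite or
countable index set `I`) and rate sequence `a`. -/
structure AssumptionA (S : ℕ → Kernel α α) {I : Type} (W : α → ℝ)
    (ν : I → Measure α) (η : I → α → ℝ) (a : ℕ → ℝ) : Prop where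
  countable : Countable I
  theta0_pos : 0 < theta0 S
  theta0_le_one : theta0 S ≤ 1
  j_nat : ∀ x : α, ∃ k : ℕ, jfun S x = (k : ℝ)
  W_meas : Measurable W
  one_le_W : ∀ x, 1 ≤ W x
  nu_prob : ∀ i, IsProbabilityMeasure (ν i)
  nu_W : ∀ i, ∫⁻ x, ENNReal.ofReal (W x) ∂(ν i) ≠ ∞
  eta_meas : ∀ i, Measurable (η i)
  eta_nonneg : ∀ i x, 0 ≤ η i x
  eta_ne_zero : ∀ i, η i ≠ 0
  eta_bdd : ∀ i, ∃ C : ℝ, ∀ x, η i x ≤ C * W x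
  summable_etanu : ∀ x, Summable (fun i => η i x * (∫⁻ y, ENNReal.ofReal (W y) ∂(ν i)).toReal)
  etanu_bdd : ∃ C : ℝ, ∀ x,
    (∑' i, η i x * (∫⁻ y, ENNReal.ofReal (W y) ∂(ν i)).toReal) ≤ C * W x
  SW_fin : ∀ n x, ∫⁻ y, ENNReal.ofReal (W y) ∂(S n x) ≠ ∞
  a_nonneg : ∀ n, 0 ≤ a n
  a_tendsto : Tendsto a atTop (nhds 0)
  approx : ∀ f : α → ℝ, Measurable f → ∀ c : ℝ, 0 ≤ c → (∀ x, |f x| ≤ c * W x) →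
    ∀ n : ℕ, 1 ≤ n → ∀ x : α,
      |((theta0 S).toReal)⁻¹ ^ n * (n : ℝ) ^ (-(jfun S x)) * (∫ y, f y ∂(S n x)) -
        ∑' i, η i x * ∫ y, f y ∂(ν i)| ≤ a n * W x * c

/-- `ν` is a quasi-stationary distribution for `S`. -/
def IsQSD (S : ℕ → Kernel α α) (ν : Measure α) : Prop :=
  IsProbabilityMeasure ν ∧ ∀ n, kmass S n ν ≠ 0 ∧
    Measure.bind ν (fun x => S n x) = kmass S n ν • ν

set_option maxHeartbeats 3000000 in
/-- Under Assumption (A), for every `x ∈ D` and every `n ≥ 0`: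
`𝔼_x[η_S(X_n) 𝟙_{j_S(X_n) = j_S(x)} 𝟙_{n < τ_∂}] = θ_{0,S}^n η_S(x)`. -/
theorem expectation_etaS_indicator_eq
    (S : ℕ → Kernel α α) (hS : IsSubMarkovSemigroup S)
    {I : Type} {W : α → ℝ} {ν : I → Measure α} {η : I → α → ℝ} {a : ℕ → ℝ}
    (hA : AssumptionA S W ν η a) :
    ∀ (x : α) (n : ℕ),
      ∫ y, ({y : α | jfun S y = jfun S x}.indicator (fun y => ∑' i, η i y)) y ∂(S n x) =
        (theta0 S).toReal ^ n * ∑' i, η i x := by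
  intro x n
  obtain ⟨hS0, hSsemi, hSsub⟩ := hS
  haveI := hA.countable
  have hθpos : 0 < theta0 S := hA.theta0_pos
  have hθfin : theta0 S ≠ ⊤ := (lt_of_le_of_lt hA.theta0_le_one one_lt_top).ne
  set θR : ℝ := (theta0 S).toReal with hθRdef
  have hθRpos : 0 < θR := ENNReal.toReal_pos hθpos.ne' hθfin
  -- masses
  have hmass_ne : ∀ m y, S m y Set.univ ≠ ⊤ :=
    fun m y => (lt_of_le_of_lt (hSsub m y) one_lt_top).ne
  have hmassR_le : ∀ m y, (S m y Set.univ).toReal ≤ 1 := by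
    intro m y
    have := ENNReal.toReal_mono (by norm_num) (hSsub m y)
    simpa using this
  have hmassR_nonneg : ∀ m y, 0 ≤ (S m y Set.univ).toReal := fun m y => ENNReal.toReal_nonneg
  -- eta
  set e : α → ℝ := fun y => ∑' i, η i y with he
  have heta_nonneg : ∀ y, 0 ≤ e y := fun y => tsum_nonneg (fun i => hA.eta_nonneg i y)
  have hnuW_ge1 : ∀ i, 1 ≤ (∫⁻ z, ENNReal.ofReal (W z) ∂(ν i)).toReal := by
    intro i
    haveI := hA.nu_prob i
    have h1 : (1 : ℝ≥0∞) ≤ ∫⁻ z, ENNReal.ofReal (W z) ∂(ν i) := by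
      calc (1 : ℝ≥0∞) = ∫⁻ _, 1 ∂(ν i) := by simp
        _ ≤ _ := lintegral_mono fun z => by
            rw [show (1 : ℝ≥0∞) = ENNReal.ofReal 1 by simp]
            exact ENNReal.ofReal_le_ofReal (le_trans (le_refl _) (hA.one_le_W z))
    have h2 := ENNReal.toReal_mono (hA.nu_W i) h1
    simpa using h2
  have hsum_e : ∀ y, Summable (fun i => η i y) := by
    intro y
    apply Summable.of_nonneg_of_le (fun i => hA.eta_nonneg i y) _ (hA.summable_etanu y)
    intro i
    exact le_mul_of_one_le_right (hA.eta_nonneg i y) (hnuW_ge1 i)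
  obtain ⟨C0, hC0⟩ := hA.etanu_bdd
  have he_le : ∀ y, e y ≤ C0 * W y := by
    intro y
    calc e y ≤ ∑' i, η i y * (∫⁻ z, ENNReal.ofReal (W z) ∂(ν i)).toReal := by
          apply Summable.tsum_le_tsum _ (hsum_e y) (hA.summable_etanu y)
          intro i
          exact le_mul_of_one_le_right (hA.eta_nonneg i y) (hnuW_ge1 i)
      _ ≤ C0 * W y := hC0 y
  have he_meas : Measurable e := by
    have hrep : e = fun y => (∑' i, ENNReal.ofReal (η i y)).toReal := by
      funext y
      have h1 : ENNReal.ofReal (e y) = ∑' i, ENNReal.ofReal (η i y) :=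
        ENNReal.ofReal_tsum_of_nonneg (fun i => hA.eta_nonneg i y) (hsum_e y)
      rw [← h1, ENNReal.toReal_ofReal (heta_nonneg y)]
    rw [hrep]
    exact (Measurable.ennreal_tsum fun i => (hA.eta_meas i).ennreal_ofReal).ennreal_toReal
  -- a bounded
  obtain ⟨Ca, hCa⟩ : ∃ Ca : ℝ, ∀ m, a m ≤ Ca := by
    obtain ⟨Ca, hCa⟩ := hA.a_tendsto.bddAbove_range
    exact ⟨Ca, fun m => hCa ⟨m, rfl⟩⟩
  have hCa0 : 0 ≤ Ca := le_trans (hA.a_nonneg 0) (hCa 0)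
  -- basic approx with f = 1
  have happrox1 : ∀ m : ℕ, 1 ≤ m → ∀ y : α,
      |θR⁻¹ ^ m * (m : ℝ) ^ (-(jfun S y)) * (S m y Set.univ).toReal - e y| ≤ a m * W y := by
    intro m hm y
    have hone : ∀ z : α, |(fun _ : α => (1:ℝ)) z| ≤ 1 * W z := by
      intro z
      simpa using hA.one_le_W z
    have h := hA.approx (fun _ => 1) measurable_const 1 zero_le_one hone m hm y
    have hnu1 : ∀ i, ∫ z, (fun _ : α => (1:ℝ)) z ∂(ν i) = 1 := by
      intro i
      haveI := hA.nu_prob i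
      simp
    simp only [hnu1, integral_const, smul_eq_mul, mul_one] at h
    rw [hθRdef]
    exact h
  have hub : ∀ m : ℕ, 1 ≤ m → ∀ y : α,
      θR⁻¹ ^ m * (m : ℝ) ^ (-(jfun S y)) * (S m y Set.univ).toReal ≤ e y + a m * W y := by
    intro m hm y
    have := abs_le.mp (happrox1 m hm y)
    linarith [this.2]
  -- nonemptiness of the Ffun zero set
  have hne : ∀ y : α, ∃ l, 0 ≤ l ∧ Ffun S l y = 0 := by
    intro y
    obtain ⟨ky, hky⟩ := hA.j_nat y
    refine ⟨(ky : ℝ) + 1, by positivity, ?_⟩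
    have hreal : Tendsto
        (fun m : ℕ => (m : ℝ) ^ (-((ky:ℝ) + 1)) * θR⁻¹ ^ m * (S m y Set.univ).toReal)
        atTop (nhds 0) := by
      apply squeeze_zero' (g := fun m : ℕ => (m : ℝ)⁻¹ * (e y + Ca * W y))
      · filter_upwards [Filter.eventually_ge_atTop 1] with m hm
        have hmpos : (0:ℝ) < (m:ℝ) := by exact_mod_cast hm
        have h1 : (0:ℝ) ≤ (m : ℝ) ^ (-((ky:ℝ) + 1)) := Real.rpow_nonneg (by positivity) _
        positivity
      · filter_upwards [Filter.eventually_ge_atTop 1] with m hm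
        have hmpos : (0:ℝ) < (m:ℝ) := by exact_mod_cast hm
        have hsplit : (m : ℝ) ^ (-((ky:ℝ) + 1)) = (m : ℝ) ^ (-(ky:ℝ)) * (m:ℝ)⁻¹ := by
          rw [← Real.rpow_neg_one (m:ℝ), ← Real.rpow_add hmpos]
          ring_nf
        have hu := hub m hm y
        rw [hky] at hu
        have hWpos : (0:ℝ) < W y := lt_of_lt_of_le one_pos (hA.one_le_W y)
        have haW : a m * W y ≤ Ca * W y := mul_le_mul_of_nonneg_right (hCa m) (le_of_lt hWpos)
        calc (m : ℝ) ^ (-((ky:ℝ) + 1)) * θR⁻¹ ^ m * (S m y Set.univ).toReal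
            = (m:ℝ)⁻¹ * (θR⁻¹ ^ m * (m : ℝ) ^ (-(ky:ℝ)) * (S m y Set.univ).toReal) := by
              rw [hsplit]; ring
          _ ≤ (m:ℝ)⁻¹ * (e y + Ca * W y) := by
              apply mul_le_mul_of_nonneg_left _ (by positivity)
              linarith
      · have h0 := (tendsto_inv_atTop_nhds_zero_nat (𝕜 := ℝ)).mul_const (e y + Ca * W y)
        simpa using h0
    have hofreal : Tendsto
        (fun m : ℕ => ENNReal.ofReal
          ((m : ℝ) ^ (-((ky:ℝ) + 1)) * θR⁻¹ ^ m * (S m y Set.univ).toReal))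
        atTop (nhds 0) := by
      have := (ENNReal.continuous_ofReal.tendsto 0).comp hreal
      simpa [Function.comp_def] using this
    have heq : (fun m : ℕ => ENNReal.ofReal
          ((m : ℝ) ^ (-((ky:ℝ) + 1)) * θR⁻¹ ^ m * (S m y Set.univ).toReal)) =ᶠ[atTop]
        (fun m : ℕ => (m : ℝ≥0∞) ^ (-((ky:ℝ) + 1)) * (theta0 S)⁻¹ ^ m * (S m y Set.univ)) := by
      filter_upwards [Filter.eventually_ge_atTop 1] with m hm
      rw [hθRdef]
      exact (ennreal_expr_eq S hθpos hθfin hm y (hmass_ne m y) _).symm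
    exact (hofreal.congr' heq).liminf_eq
  -- sets
  obtain ⟨k, hk⟩ := hA.j_nat x
  have hAmeas : MeasurableSet {y : α | jfun S y ≤ (k : ℝ)} :=
    measurableSet_jfun_le S hA.j_nat hne k
  have hEmeas : MeasurableSet {y : α | jfun S y = (k : ℝ)} :=
    measurableSet_jfun_eq S hA.j_nat hne k
  set A : Set α := {y : α | jfun S y ≤ (k : ℝ)} with hAdef
  set μ : Measure α := S n x with hμdef
  haveI : IsFiniteMeasure μ := ⟨lt_of_le_of_lt (hSsub n x) one_lt_top⟩
  set g : α → ℝ := {y : α | jfun S y = (k : ℝ)}.indicator e with hgdef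
  set v : ℕ → α → ℝ :=
    fun m y => θR⁻¹ ^ m * ((n : ℝ) + m) ^ (-(k : ℝ)) * (S m y Set.univ).toReal with hvdef
  -- integrability
  have hWint : Integrable W μ := by
    constructor
    · exact hA.W_meas.aestronglyMeasurable
    · rw [HasFiniteIntegral]
      have heq : ∫⁻ z, ‖W z‖ₑ ∂μ = ∫⁻ z, ENNReal.ofReal (W z) ∂μ :=
        lintegral_congr fun z =>
          Real.enorm_eq_ofReal (le_trans zero_le_one (hA.one_le_W z))
      rw [heq, hμdef]
      exact lt_top_iff_ne_top.mpr (hA.SW_fin n x)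
  have hvmeas : ∀ m, Measurable (v m) := by
    intro m
    exact (measurable_const.mul
      ((Kernel.measurable_coe (S m) MeasurableSet.univ).ennreal_toReal))
  have hvnonneg : ∀ m y, 0 ≤ v m y := by
    intro m y
    have h1 : (0:ℝ) ≤ ((n : ℝ) + m) ^ (-(k : ℝ)) := Real.rpow_nonneg (by positivity) _
    have h2 : (0:ℝ) ≤ θR⁻¹ ^ m := by positivity
    exact mul_nonneg (mul_nonneg h2 h1) (hmassR_nonneg m y)
  have hvint : ∀ m, Integrable (v m) μ := by
    intro m
    set c : ℝ := θR⁻¹ ^ m * ((n : ℝ) + m) ^ (-(k : ℝ)) with hcdef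
    have hc : 0 ≤ c := by
      have h1 : (0:ℝ) ≤ ((n : ℝ) + m) ^ (-(k : ℝ)) := Real.rpow_nonneg (by positivity) _
      positivity
    apply Integrable.mono' (integrable_const c) (hvmeas m).aestronglyMeasurable
    filter_upwards with y
    rw [Real.norm_of_nonneg (hvnonneg m y)]
    calc v m y ≤ c * 1 := mul_le_mul_of_nonneg_left (hmassR_le m y) hc
      _ = c := mul_one c
  have hgint : Integrable g μ := by
    apply Integrable.mono' (hWint.const_mul C0) (he_meas.indicator hEmeas).aestronglyMeasurable
    filter_upwards with y
    have hg0 : 0 ≤ g y := Set.indicator_nonneg (fun z _ => heta_nonneg z) y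
    have hgle : g y ≤ C0 * W y := by
      rw [hgdef]
      by_cases hy : y ∈ {y : α | jfun S y = (k : ℝ)}
      · rw [Set.indicator_of_mem hy]
        exact he_le y
      · rw [Set.indicator_of_notMem hy]
        exact le_trans (heta_nonneg y) (he_le y)
    rw [Real.norm_of_nonneg hg0]
    exact hgle
  -- the semigroup integral identity
  have hsemi : ∀ m : ℕ, ∫ y, (S m y Set.univ).toReal ∂μ = (S (n + m) x Set.univ).toReal := by
    intro m
    have hcomp : S (n + m) x Set.univ = ∫⁻ y, S m y Set.univ ∂μ := by
      rw [hSsemi n m, Kernel.comp_apply,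
        Measure.bind_apply MeasurableSet.univ (Kernel.measurable (S m)).aemeasurable]
    have hint := integral_toReal
      ((Kernel.measurable_coe (S m) MeasurableSet.univ).aemeasurable (μ := μ))
      (Filter.Eventually.of_forall fun y => lt_of_le_of_lt (hSsub m y) one_lt_top)
    rw [hint, ← hcomp]
  -- the integral of v m equals the approx quantity at x
  have hTm : ∀ m : ℕ,
      ∫ y, v m y ∂μ = θR ^ n *
        (θR⁻¹ ^ (n + m) * ((n + m : ℕ) : ℝ) ^ (-(jfun S x)) * (S (n + m) x Set.univ).toReal) := by
    intro m
    have hθRne : θR ≠ 0 := hθRpos.ne'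
    have h1 : ∫ y, v m y ∂μ
        = θR⁻¹ ^ m * ((n : ℝ) + m) ^ (-(k : ℝ)) * ∫ y, (S m y Set.univ).toReal ∂μ := by
      rw [show (fun y => v m y) = fun y =>
          (θR⁻¹ ^ m * ((n : ℝ) + m) ^ (-(k : ℝ))) * (S m y Set.univ).toReal from rfl]
      rw [integral_const_mul]
    rw [h1, hsemi m, hk]
    have hcast : ((n + m : ℕ) : ℝ) = (n : ℝ) + m := by push_cast; ring
    rw [hcast, pow_add]
    have hpow : θR ^ n * θR⁻¹ ^ n = 1 := by
      rw [inv_pow, mul_inv_cancel₀ (pow_ne_zero n hθRne)]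
    field_simp
    rw [mul_assoc _ (θR ^ n), one_div, hpow, mul_one]
  -- hq and helpers
  have hq : ∀ m : ℕ, |θR⁻¹ ^ n * ∫ y, v (m + 1) y ∂μ - e x| ≤ a (n + (m + 1)) * W x := by
    intro m
    have h := happrox1 (n + (m + 1)) (by omega) x
    have hQ : θR⁻¹ ^ n * ∫ y, v (m + 1) y ∂μ
        = θR⁻¹ ^ (n + (m + 1)) * ((n + (m + 1) : ℕ) : ℝ) ^ (-(jfun S x)) *
          (S (n + (m + 1)) x Set.univ).toReal := by
      rw [hTm (m + 1), ← mul_assoc, inv_pow, inv_mul_cancel₀ (pow_ne_zero n hθRpos.ne'),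
        one_mul, inv_pow]
    rw [hQ]
    exact h
  have hqlim : ∀ y : α, Tendsto (fun m : ℕ =>
      θR⁻¹ ^ (m + 1) * ((m + 1 : ℕ) : ℝ) ^ (-(jfun S y)) * (S (m + 1) y Set.univ).toReal)
      atTop (nhds (e y)) := by
    intro y
    have h1 : Tendsto (fun m : ℕ => m + 1) atTop atTop :=
      tendsto_add_atTop_nat 1
    have hb : Tendsto (fun m : ℕ => a (m + 1) * W y) atTop (nhds 0) := by
      simpa using (hA.a_tendsto.comp h1).mul_const (W y)
    have hsub : Tendsto (fun m : ℕ =>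
        θR⁻¹ ^ (m + 1) * ((m + 1 : ℕ) : ℝ) ^ (-(jfun S y)) * (S (m + 1) y Set.univ).toReal
          - e y) atTop (nhds 0) := by
      apply squeeze_zero_norm _ hb
      intro m
      rw [Real.norm_eq_abs]
      exact happrox1 (m + 1) (by omega) y
    simpa using hsub.add_const (e y)
  have hvle : ∀ m : ℕ, ∀ y : α, jfun S y ≤ (k : ℝ) →
      v (m + 1) y ≤ θR⁻¹ ^ (m + 1) * ((m + 1 : ℕ) : ℝ) ^ (-(jfun S y)) *
        (S (m + 1) y Set.univ).toReal := by
    intro m y hy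
    obtain ⟨ky, hky⟩ := hA.j_nat y
    have hkyk : ky ≤ k := by
      rw [hky] at hy; exact_mod_cast hy
    have hM1 : (1 : ℝ) ≤ ((m + 1 : ℕ) : ℝ) := by exact_mod_cast Nat.one_le_iff_ne_zero.mpr (by omega)
    have hMpos : (0 : ℝ) < ((m + 1 : ℕ) : ℝ) := lt_of_lt_of_le one_pos hM1
    have hNMpos : (0 : ℝ) < (n : ℝ) + ((m + 1 : ℕ) : ℝ) := by positivity
    have hineq : ((n : ℝ) + ((m + 1 : ℕ) : ℝ)) ^ (-(k : ℝ)) ≤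
        ((m + 1 : ℕ) : ℝ) ^ (-(ky : ℝ)) := by
      rw [Real.rpow_neg (le_of_lt hNMpos), Real.rpow_neg (le_of_lt hMpos),
        Real.rpow_natCast, Real.rpow_natCast]
      apply inv_anti₀ (by positivity)
      calc ((m + 1 : ℕ) : ℝ) ^ ky ≤ ((m + 1 : ℕ) : ℝ) ^ k := pow_le_pow_right₀ hM1 hkyk
        _ ≤ ((n : ℝ) + ((m + 1 : ℕ) : ℝ)) ^ k := by
            apply pow_le_pow_left₀ (by positivity)
            have : (0:ℝ) ≤ (n : ℝ) := by positivity
            linarith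
      -- done
    rw [hky]
    calc v (m + 1) y
        = θR⁻¹ ^ (m + 1) * ((n : ℝ) + ((m + 1 : ℕ) : ℝ)) ^ (-(k : ℝ)) *
          (S (m + 1) y Set.univ).toReal := rfl
      _ ≤ θR⁻¹ ^ (m + 1) * ((m + 1 : ℕ) : ℝ) ^ (-(ky : ℝ)) * (S (m + 1) y Set.univ).toReal := by
          apply mul_le_mul_of_nonneg_right _ (hmassR_nonneg _ y)
          apply mul_le_mul_of_nonneg_left hineq (by positivity)
  have hvbound : ∀ m : ℕ, ∀ y ∈ A, ‖v (m + 1) y‖ ≤ (C0 + Ca) * W y := by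
    intro m y hy
    have hWpos : (0 : ℝ) < W y := lt_of_lt_of_le one_pos (hA.one_le_W y)
    rw [Real.norm_of_nonneg (hvnonneg (m + 1) y)]
    calc v (m + 1) y ≤ θR⁻¹ ^ (m + 1) * ((m + 1 : ℕ) : ℝ) ^ (-(jfun S y)) *
          (S (m + 1) y Set.univ).toReal := hvle m y hy
      _ ≤ e y + a (m + 1) * W y := hub (m + 1) (by omega) y
      _ ≤ C0 * W y + Ca * W y := by
          have h1 := he_le y
          have h2 : a (m + 1) * W y ≤ Ca * W y :=
            mul_le_mul_of_nonneg_right (hCa (m + 1)) (le_of_lt hWpos)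
          linarith
      _ = (C0 + Ca) * W y := by ring
  -- limit of total integral
  have hTlim : Tendsto (fun m => ∫ y, v (m + 1) y ∂μ) atTop (nhds (θR ^ n * e x)) := by
    have h1 : Tendsto (fun m : ℕ => n + (m + 1)) atTop atTop := by
      apply tendsto_atTop_mono (fun m => by omega : ∀ m : ℕ, m ≤ n + (m + 1)) tendsto_id
    have hb : Tendsto (fun m : ℕ => a (n + (m + 1)) * W x) atTop (nhds 0) := by
      simpa using (hA.a_tendsto.comp h1).mul_const (W x)
    have hsub : Tendsto (fun m : ℕ => θR⁻¹ ^ n * ∫ y, v (m + 1) y ∂μ - e x)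
        atTop (nhds 0) := by
      apply squeeze_zero_norm _ hb
      intro m
      rw [Real.norm_eq_abs]
      exact hq m
    have h2 : Tendsto (fun m : ℕ => θR⁻¹ ^ n * ∫ y, v (m + 1) y ∂μ) atTop (nhds (e x)) := by
      simpa using hsub.add_const (e x)
    have h3 := h2.const_mul (θR ^ n)
    apply h3.congr
    intro m
    rw [← mul_assoc, inv_pow, mul_inv_cancel₀ (pow_ne_zero n hθRpos.ne'), one_mul]
  -- the complement of A is null
  have hBnull : μ Aᶜ = 0 := by
    by_contra hμB
    set Vm : ℕ → α → ℝ≥0∞ := fun m y => ENNReal.ofReal (v (m + 1) y) with hVmdef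
    have hVmeas : ∀ m, Measurable (Vm m) := fun m => (hvmeas (m + 1)).ennreal_ofReal
    -- divergence of v m y on Aᶜ
    have hdiv : ∀ y ∈ Aᶜ, Tendsto (fun m : ℕ => v m y) atTop atTop := by
      intro y hy
      obtain ⟨ky, hky⟩ := hA.j_nat y
      have hky_gt : (k : ℝ) + 1 ≤ (ky : ℝ) := by
        have h0 : ¬ (jfun S y ≤ (k : ℝ)) := hy
        rw [hky] at h0
        have : k < ky := by exact_mod_cast not_le.mp h0
        exact_mod_cast this
      have hFpos : Ffun S ((k : ℝ) + 2⁻¹) y ≠ 0 := by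
        intro h0
        have hmem : ((k : ℝ) + 2⁻¹) ∈ {l : ℝ | 0 ≤ l ∧ Ffun S l y = 0} := ⟨by positivity, h0⟩
        have hle : jfun S y ≤ (k : ℝ) + 2⁻¹ := by
          rw [jfun_eq_sInf]
          exact csInf_le ⟨0, fun l hl => hl.1⟩ hmem
        rw [hky] at hle
        linarith
      set c' : ℝ≥0∞ := min (Ffun S ((k : ℝ) + 2⁻¹) y) 1 / 2 with hc'def
      have hmin_ne : min (Ffun S ((k : ℝ) + 2⁻¹) y) 1 ≠ 0 :=
        (lt_min (pos_iff_ne_zero.mpr hFpos) one_pos).ne'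
      have hmin_netop : min (Ffun S ((k : ℝ) + 2⁻¹) y) 1 ≠ ⊤ :=
        (lt_of_le_of_lt (min_le_right _ _) one_lt_top).ne
      have hc'pos : 0 < c' := ENNReal.half_pos hmin_ne
      have hc'top : c' ≠ ⊤ := by
        apply ne_top_of_le_ne_top hmin_netop
        exact le_trans (ENNReal.half_le_self) (le_refl _)
      have hc'lt : c' < Ffun S ((k : ℝ) + 2⁻¹) y :=
        lt_of_lt_of_le (ENNReal.half_lt_self hmin_ne hmin_netop) (min_le_left _ _)
      have hev := eventually_lt_of_lt_liminf hc'lt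
      set cR : ℝ := c'.toReal with hcRdef
      have hcRpos : 0 < cR := ENNReal.toReal_pos hc'pos.ne' hc'top
      have hlow : ∀ᶠ m : ℕ in atTop, cR / 2 ^ k * (m : ℝ) ^ (2⁻¹ : ℝ) ≤ v m y := by
        filter_upwards [hev, Filter.eventually_ge_atTop 1, Filter.eventually_ge_atTop n]
          with m hm h1 hn2
        rw [ennreal_expr_eq S hθpos hθfin h1 y (hmass_ne m y) ((k : ℝ) + 2⁻¹)] at hm
        rw [← hθRdef] at hm
        have hMpos : (0 : ℝ) < (m : ℝ) := by exact_mod_cast h1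
        have hmR : cR < (m : ℝ) ^ (-((k : ℝ) + 2⁻¹)) * θR⁻¹ ^ m * (S m y Set.univ).toReal := by
          rw [hcRdef]
          exact (ENNReal.lt_ofReal_iff_toReal_lt hc'top).mp hm
        set P : ℝ := θR⁻¹ ^ m * (S m y Set.univ).toReal with hPdef
        have hPnonneg : 0 ≤ P := mul_nonneg (by positivity) (hmassR_nonneg m y)
        have hMl : (0 : ℝ) < (m : ℝ) ^ ((k : ℝ) + 2⁻¹) := Real.rpow_pos_of_pos hMpos _
        have hP : cR * (m : ℝ) ^ ((k : ℝ) + 2⁻¹) < P := by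
          have hrw : (m : ℝ) ^ (-((k : ℝ) + 2⁻¹)) * θR⁻¹ ^ m * (S m y Set.univ).toReal
              = P / (m : ℝ) ^ ((k : ℝ) + 2⁻¹) := by
            rw [Real.rpow_neg (le_of_lt hMpos)]
            rw [div_eq_mul_inv, hPdef]
            ring
          rw [hrw] at hmR
          exact (lt_div_iff₀ hMl).mp hmR
        have hvm : v m y = P / ((n : ℝ) + m) ^ k := by
          have hNMpos : (0 : ℝ) < (n : ℝ) + m := by positivity
          rw [hvdef]
          simp only []
          rw [Real.rpow_neg (le_of_lt hNMpos), Real.rpow_natCast, div_eq_mul_inv, hPdef]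
          ring
        have hNMpos : (0 : ℝ) < (n : ℝ) + m := by positivity
        have hpowpos : (0 : ℝ) < ((n : ℝ) + m) ^ k := by positivity
        have h2m : ((n : ℝ) + m) ^ k ≤ 2 ^ k * (m : ℝ) ^ k := by
          have hn2' : (n : ℝ) ≤ (m : ℝ) := by exact_mod_cast hn2
          calc ((n : ℝ) + m) ^ k ≤ (2 * (m : ℝ)) ^ k := by
                apply pow_le_pow_left₀ (by positivity)
                linarith
            _ = 2 ^ k * (m : ℝ) ^ k := mul_pow 2 (m : ℝ) k
        have hsplit : (m : ℝ) ^ ((k : ℝ) + 2⁻¹) = (m : ℝ) ^ k * (m : ℝ) ^ (2⁻¹ : ℝ) := by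
          rw [← Real.rpow_natCast (m : ℝ) k, ← Real.rpow_add hMpos]
        have hMk : (0 : ℝ) < (m : ℝ) ^ k := by positivity
        calc cR / 2 ^ k * (m : ℝ) ^ (2⁻¹ : ℝ)
            = cR * (m : ℝ) ^ ((k : ℝ) + 2⁻¹) / (2 ^ k * (m : ℝ) ^ k) := by
              rw [hsplit]; field_simp
          _ ≤ P / (2 ^ k * (m : ℝ) ^ k) := by
              gcongr
          _ ≤ P / ((n : ℝ) + m) ^ k := by
              apply div_le_div_of_nonneg_left hPnonneg hpowpos h2m
          _ = v m y := hvm.symm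
      have hrt : Tendsto (fun m : ℕ => cR / 2 ^ k * (m : ℝ) ^ (2⁻¹ : ℝ)) atTop atTop := by
        apply Tendsto.const_mul_atTop (by positivity)
        exact (tendsto_rpow_atTop (by norm_num)).comp tendsto_natCast_atTop_atTop
      exact tendsto_atTop_mono' atTop hlow hrt
    -- liminf is ⊤ on Aᶜ
    have hliminf_top : ∀ y ∈ Aᶜ, Filter.liminf (fun m => Vm m y) atTop = ⊤ := by
      intro y hy
      have h1 : Tendsto (fun m : ℕ => v (m + 1) y) atTop atTop :=
        (hdiv y hy).comp (tendsto_add_atTop_nat 1)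
      have h2 : Tendsto (fun m => Vm m y) atTop (nhds ⊤) :=
        ENNReal.tendsto_ofReal_atTop.comp h1
      exact h2.liminf_eq
    -- Fatou
    have hfatou := lintegral_liminf_le (μ := μ.restrict Aᶜ) (u := atTop) hVmeas
    have hleft : ∫⁻ y, Filter.liminf (fun m => Vm m y) atTop ∂(μ.restrict Aᶜ) = ⊤ := by
      have h1 : ∫⁻ y in Aᶜ, Filter.liminf (fun m => Vm m y) atTop ∂μ
          = ∫⁻ _ in Aᶜ, (⊤ : ℝ≥0∞) ∂μ := by
        apply setLIntegral_congr_fun hAmeas.compl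
        exact hliminf_top
      rw [h1, setLIntegral_const]
      rw [ENNReal.top_mul hμB]
    have hbound : ∀ m, ∫⁻ y, Vm m y ∂(μ.restrict Aᶜ) ≤
        ENNReal.ofReal (θR ^ n * (e x + Ca * W x)) := by
      intro m
      have hWpos : (0 : ℝ) < W x := lt_of_lt_of_le one_pos (hA.one_le_W x)
      have hint : ∫ y, v (m + 1) y ∂μ ≤ θR ^ n * (e x + Ca * W x) := by
        have h1 := (abs_le.mp (hq m)).2
        have h2 : θR⁻¹ ^ n * ∫ y, v (m + 1) y ∂μ ≤ e x + Ca * W x := by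
          have h3 : a (n + (m + 1)) * W x ≤ Ca * W x :=
            mul_le_mul_of_nonneg_right (hCa (n + (m + 1))) (le_of_lt hWpos)
          linarith
        have h4 := mul_le_mul_of_nonneg_left h2 (le_of_lt (pow_pos hθRpos n))
        rw [← mul_assoc, inv_pow, mul_inv_cancel₀ (pow_ne_zero n hθRpos.ne'), one_mul] at h4
        exact h4
      calc ∫⁻ y, Vm m y ∂(μ.restrict Aᶜ) ≤ ∫⁻ y, Vm m y ∂μ := by
            apply setLIntegral_le_lintegral
        _ = ENNReal.ofReal (∫ y, v (m + 1) y ∂μ) :=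
            (ofReal_integral_eq_lintegral_ofReal (hvint (m + 1))
              (Filter.Eventually.of_forall (hvnonneg (m + 1)))).symm
        _ ≤ _ := ENNReal.ofReal_le_ofReal hint
    have hright : Filter.liminf (fun m => ∫⁻ y, Vm m y ∂(μ.restrict Aᶜ)) atTop ≤
        ENNReal.ofReal (θR ^ n * (e x + Ca * W x)) :=
      liminf_le_of_frequently_le (Filter.Eventually.frequently
        (Filter.Eventually.of_forall hbound))
    rw [hleft] at hfatou
    have htop : (⊤ : ℝ≥0∞) ≤ ENNReal.ofReal (θR ^ n * (e x + Ca * W x)) :=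
      le_trans hfatou hright
    exact ENNReal.ofReal_ne_top (top_le_iff.mp htop)
  -- dominated convergence on A
  have hDCT : Tendsto (fun m => ∫ y in A, v (m + 1) y ∂μ) atTop (nhds (∫ y in A, g y ∂μ)) := by
    apply tendsto_integral_of_dominated_convergence (fun y => (C0 + Ca) * W y)
    · exact fun m => (hvmeas (m + 1)).aestronglyMeasurable
    · exact (hWint.const_mul (C0 + Ca)).restrict
    · intro m
      rw [ae_restrict_iff' hAmeas]
      exact Filter.Eventually.of_forall (fun y hy => hvbound m y hy)
    · rw [ae_restrict_iff' hAmeas]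
      apply Filter.Eventually.of_forall
      intro y hy
      obtain ⟨ky, hky⟩ := hA.j_nat y
      have hkyk : ky ≤ k := by
        have : jfun S y ≤ (k : ℝ) := hy
        rw [hky] at this; exact_mod_cast this
      by_cases hcase : ky = k
      · -- jfun y = k : limit is e y = g y
        subst hcase
        have hgy : g y = e y := by
          rw [hgdef]
          exact Set.indicator_of_mem (by exact hky) e
        rw [hgy]
        have hratio : Tendsto (fun m : ℕ =>
            (((m + 1 : ℕ) : ℝ) ^ ky) / (((n : ℝ) + ((m + 1 : ℕ) : ℝ)) ^ ky)) atTop (nhds 1) :=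
          (ratio_pow_tendsto n ky).comp (tendsto_add_atTop_nat 1)
        have hmul := hratio.mul (hqlim y)
        rw [one_mul] at hmul
        apply hmul.congr
        intro m
        have hM1 : (1 : ℝ) ≤ ((m + 1 : ℕ) : ℝ) := by
          exact_mod_cast Nat.one_le_iff_ne_zero.mpr (by omega)
        have hMpos : (0 : ℝ) < ((m + 1 : ℕ) : ℝ) := lt_of_lt_of_le one_pos hM1
        have hNMpos : (0 : ℝ) < (n : ℝ) + ((m + 1 : ℕ) : ℝ) := by positivity
        rw [hky]
        rw [Real.rpow_neg (le_of_lt hMpos), Real.rpow_natCast]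
        show (((m + 1 : ℕ) : ℝ) ^ ky) / (((n : ℝ) + ((m + 1 : ℕ) : ℝ)) ^ ky) *
            (θR⁻¹ ^ (m + 1) * (((m + 1 : ℕ) : ℝ) ^ ky)⁻¹ * (S (m + 1) y Set.univ).toReal)
            = v (m + 1) y
        have hvm : v (m + 1) y = θR⁻¹ ^ (m + 1) *
            ((n : ℝ) + ((m + 1 : ℕ) : ℝ)) ^ (-(ky : ℝ)) * (S (m + 1) y Set.univ).toReal := rfl
        rw [hvm, Real.rpow_neg (le_of_lt hNMpos), Real.rpow_natCast]
        have hMk : ((m + 1 : ℕ) : ℝ) ^ ky ≠ 0 := by positivity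
        field_simp
      · -- jfun y = ky < k : limit is 0 = g y
        have hkylt : ky < k := lt_of_le_of_ne hkyk hcase
        have hgy : g y = 0 := by
          rw [hgdef]
          apply Set.indicator_of_notMem
          intro hmem
          have : jfun S y = (k : ℝ) := hmem
          rw [hky] at this
          exact hcase (by exact_mod_cast this)
        rw [hgy]
        apply squeeze_zero' (g := fun m : ℕ => (((m + 1 : ℕ) : ℝ))⁻¹ * (e y + Ca * W y))
        · exact Filter.Eventually.of_forall (fun m => hvnonneg (m + 1) y)
        · apply Filter.Eventually.of_forall
          intro m
          have hM1 : (1 : ℝ) ≤ ((m + 1 : ℕ) : ℝ) := by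
            exact_mod_cast Nat.one_le_iff_ne_zero.mpr (by omega)
          have hMpos : (0 : ℝ) < ((m + 1 : ℕ) : ℝ) := lt_of_lt_of_le one_pos hM1
          have hNMpos : (0 : ℝ) < (n : ℝ) + ((m + 1 : ℕ) : ℝ) := by positivity
          have hWpos : (0 : ℝ) < W y := lt_of_lt_of_le one_pos (hA.one_le_W y)
          have hkey : ((n : ℝ) + ((m + 1 : ℕ) : ℝ)) ^ (-(k : ℝ)) ≤
              (((m + 1 : ℕ) : ℝ))⁻¹ * (((m + 1 : ℕ) : ℝ) ^ (-(ky : ℝ))) := by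
            rw [Real.rpow_neg (le_of_lt hNMpos), Real.rpow_neg (le_of_lt hMpos),
              Real.rpow_natCast, Real.rpow_natCast, ← mul_inv, ← pow_succ']
            apply inv_anti₀ (by positivity)
            calc ((m + 1 : ℕ) : ℝ) ^ (ky + 1) ≤ ((m + 1 : ℕ) : ℝ) ^ k :=
                  pow_le_pow_right₀ hM1 (by omega)
              _ ≤ ((n : ℝ) + ((m + 1 : ℕ) : ℝ)) ^ k := by
                  apply pow_le_pow_left₀ (by positivity)
                  have : (0:ℝ) ≤ (n : ℝ) := by positivity
                  linarith
          have hq1 : θR⁻¹ ^ (m + 1) * (((m + 1 : ℕ) : ℝ) ^ (-(ky : ℝ))) *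
              (S (m + 1) y Set.univ).toReal ≤ e y + Ca * W y := by
            have h1 := hub (m + 1) (by omega) y
            rw [hky] at h1
            have h2 : a (m + 1) * W y ≤ Ca * W y :=
              mul_le_mul_of_nonneg_right (hCa (m + 1)) (le_of_lt hWpos)
            linarith
          calc v (m + 1) y
              = θR⁻¹ ^ (m + 1) * ((n : ℝ) + ((m + 1 : ℕ) : ℝ)) ^ (-(k : ℝ)) *
                (S (m + 1) y Set.univ).toReal := rfl
            _ ≤ θR⁻¹ ^ (m + 1) * ((((m + 1 : ℕ) : ℝ))⁻¹ *
                (((m + 1 : ℕ) : ℝ) ^ (-(ky : ℝ)))) * (S (m + 1) y Set.univ).toReal := by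
                apply mul_le_mul_of_nonneg_right _ (hmassR_nonneg _ y)
                exact mul_le_mul_of_nonneg_left hkey (by positivity)
            _ = (((m + 1 : ℕ) : ℝ))⁻¹ * (θR⁻¹ ^ (m + 1) *
                (((m + 1 : ℕ) : ℝ) ^ (-(ky : ℝ))) * (S (m + 1) y Set.univ).toReal) := by ring
            _ ≤ (((m + 1 : ℕ) : ℝ))⁻¹ * (e y + Ca * W y) := by
                apply mul_le_mul_of_nonneg_left hq1 (by positivity)
        · have h1 : Tendsto (fun m : ℕ => (((m + 1 : ℕ) : ℝ))⁻¹) atTop (nhds 0) :=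
            (tendsto_inv_atTop_nhds_zero_nat (𝕜 := ℝ)).comp
              (tendsto_add_atTop_nat 1)
          simpa using h1.mul_const (e y + Ca * W y)
  -- put together
  have hAeq : ∀ m, ∫ y in A, v m y ∂μ = ∫ y, v m y ∂μ := by
    intro m
    have h1 := integral_add_compl hAmeas (hvint m)
    have h2 : ∫ y in Aᶜ, v m y ∂μ = 0 := by
      rw [show μ.restrict Aᶜ = 0 from Measure.restrict_eq_zero.mpr hBnull]
      exact integral_zero_measure _
    linarith
  have hfinal : ∫ y in A, g y ∂μ = θR ^ n * e x := by
    apply tendsto_nhds_unique hDCT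
    have : (fun m => ∫ y in A, v (m + 1) y ∂μ) = (fun m => ∫ y, v (m + 1) y ∂μ) := by
      funext m; exact hAeq (m + 1)
    rw [this]
    exact hTlim
  -- conclude
  have hgA : {y : α | jfun S y = jfun S x}.indicator e = A.indicator g := by
    have hsub : {y : α | jfun S y = (k : ℝ)} ⊆ A := fun y hy => le_of_eq hy
    rw [hk, hgdef, Set.indicator_indicator, Set.inter_eq_self_of_subset_right hsub]
  calc ∫ y, ({y : α | jfun S y = jfun S x}.indicator e) y ∂μ
      = ∫ y, (A.indicator g) y ∂μ := by rw [hgA]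
    _ = ∫ y in A, g y ∂μ := integral_indicator hAmeas
    _ = θR ^ n * e x := hfinal
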